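/- Let N ∈ ℕ*, and let f : ℝ → ℝ be (2N+1)-times continuously differentiable with all derivatives f^{(q)}, 0 ≤ q ≤ 2N+1, in L¹(ℝ), with f even and f(ω) = O(ω^{2N}) as ω → 0 (so f^{(q)}(0) = 0 for 0 ≤ q ≤ 2N−1). Define h(τ) = −(1/π) ∫₀^∞ f(ω) sin(ωτ) dω. Then there exists C ≥ 0 such that |h(τ)| ≤ C / |τ|^{2N+1} for all τ ≠ 0; one may take C = (1/π)(∫₀^∞ |f^{(2N+1)}(ω)| dω + |f^{(2N)}(0)|). -/

import Mathlib

open MeasureTheory Real Asymptotics Filter Topology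

set_option maxHeartbeats 1000000

lemma cont_cos_mul (τ : ℝ) : Continuous fun ω : ℝ => Real.cos (ω * τ) :=
  Real.continuous_cos.comp (continuous_id.mul continuous_const)

lemma cont_sin_mul (τ : ℝ) : Continuous fun ω : ℝ => Real.sin (ω * τ) :=
  Real.continuous_sin.comp (continuous_id.mul continuous_const)

lemma hasDerivAt_cos_mul (τ x : ℝ) :
    HasDerivAt (fun ω => Real.cos (ω * τ)) (-Real.sin (x * τ) * τ) x := by
  simpa [Function.comp_def] using (Real.hasDerivAt_cos (x * τ)).comp x ((hasDerivAt_id x).mul_const τ)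

lemma hasDerivAt_sin_mul (τ x : ℝ) :
    HasDerivAt (fun ω => Real.sin (ω * τ)) (Real.cos (x * τ) * τ) x := by
  simpa [Function.comp_def] using (Real.hasDerivAt_sin (x * τ)).comp x ((hasDerivAt_id x).mul_const τ)

lemma ibp_sin (g g' : ℝ → ℝ) (hg : Continuous g) (hg' : Continuous g')
    (hd : ∀ x, HasDerivAt g (g' x) x)
    (hgi : IntegrableOn g (Set.Ioi 0)) (hg'i : IntegrableOn g' (Set.Ioi 0))
    (τ : ℝ) (hτ : τ ≠ 0) :
    ∫ ω in Set.Ioi (0:ℝ), g ω * Real.sin (ω * τ)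
      = g 0 / τ + (1/τ) * ∫ ω in Set.Ioi (0:ℝ), g' ω * Real.cos (ω * τ) := by
  have htend : Tendsto g atTop (𝓝 0) :=
    tendsto_zero_of_hasDerivAt_of_integrableOn_Ioi (a := 0) (fun x _ => hd x) hg'i hgi
  set F : ℝ → ℝ := fun ω => -(g ω * Real.cos (ω * τ)) / τ with hF
  have hFd : ∀ x, HasDerivAt F
      (g x * Real.sin (x * τ) - (1/τ) * (g' x * Real.cos (x * τ))) x := by
    intro x
    have := (((hd x).mul (hasDerivAt_cos_mul τ x)).neg).div_const τ
    refine this.congr_deriv ?_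
    field_simp
    ring
  have hFtend : Tendsto F atTop (𝓝 0) := by
    apply squeeze_zero_norm (a := fun ω => |g ω| / |τ|)
    · intro ω
      have h1 : |g ω * Real.cos (ω * τ)| ≤ |g ω| := by
        rw [abs_mul]
        exact mul_le_of_le_one_right (abs_nonneg _) (Real.abs_cos_le_one _)
      simp only [hF, Real.norm_eq_abs, abs_div, abs_neg]
      exact div_le_div_of_nonneg_right h1 (by positivity) |>.trans_eq rfl
    · have := (htend.abs).div_const |τ|
      simpa using this
  have gsin_i : IntegrableOn (fun ω => g ω * Real.sin (ω * τ)) (Set.Ioi 0) := by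
    apply hgi.abs.mono' ((hg.mul (cont_sin_mul τ)).aestronglyMeasurable)
    filter_upwards with ω
    rw [Real.norm_eq_abs, Pi.mul_apply, abs_mul]
    exact mul_le_of_le_one_right (abs_nonneg _) (Real.abs_sin_le_one _)
  have g'cos_i : IntegrableOn (fun ω => g' ω * Real.cos (ω * τ)) (Set.Ioi 0) := by
    apply hg'i.abs.mono' ((hg'.mul (cont_cos_mul τ)).aestronglyMeasurable)
    filter_upwards with ω
    rw [Real.norm_eq_abs, Pi.mul_apply, abs_mul]
    exact mul_le_of_le_one_right (abs_nonneg _) (Real.abs_cos_le_one _)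
  have hmain := integral_Ioi_of_hasDerivAt_of_tendsto (a := 0)
    (f := F) (f' := fun ω => g ω * Real.sin (ω * τ) - (1/τ) * (g' ω * Real.cos (ω * τ)))
    (m := 0)
    ((((hg.mul (cont_cos_mul τ)).neg.div_const τ)).continuousWithinAt)
    (fun x _ => hFd x) (gsin_i.sub (g'cos_i.const_mul (1/τ))) hFtend
  rw [integral_sub gsin_i (g'cos_i.const_mul (1/τ)), integral_const_mul] at hmain
  have hF0 : F 0 = -(g 0) / τ := by simp [hF]
  have h0 : (0:ℝ) - -g 0 / τ = g 0 / τ := by ring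
  rw [hF0] at hmain
  rw [neg_div] at hmain
  linarith [hmain]

lemma ibp_cos (g g' : ℝ → ℝ) (hg : Continuous g) (hg' : Continuous g')
    (hd : ∀ x, HasDerivAt g (g' x) x)
    (hgi : IntegrableOn g (Set.Ioi 0)) (hg'i : IntegrableOn g' (Set.Ioi 0))
    (τ : ℝ) (hτ : τ ≠ 0) :
    ∫ ω in Set.Ioi (0:ℝ), g ω * Real.cos (ω * τ)
      = -(1/τ) * ∫ ω in Set.Ioi (0:ℝ), g' ω * Real.sin (ω * τ) := by
  have htend : Tendsto g atTop (𝓝 0) :=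
    tendsto_zero_of_hasDerivAt_of_integrableOn_Ioi (a := 0) (fun x _ => hd x) hg'i hgi
  set F : ℝ → ℝ := fun ω => (g ω * Real.sin (ω * τ)) / τ with hF
  have hFd : ∀ x, HasDerivAt F
      (g x * Real.cos (x * τ) + (1/τ) * (g' x * Real.sin (x * τ))) x := by
    intro x
    have := ((hd x).mul (hasDerivAt_sin_mul τ x)).div_const τ
    refine this.congr_deriv ?_
    field_simp
    ring
  have hFtend : Tendsto F atTop (𝓝 0) := by
    apply squeeze_zero_norm (a := fun ω => |g ω| / |τ|)
    · intro ω
      have h1 : |g ω * Real.sin (ω * τ)| ≤ |g ω| := by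
        rw [abs_mul]
        exact mul_le_of_le_one_right (abs_nonneg _) (Real.abs_sin_le_one _)
      simp only [hF, Real.norm_eq_abs, abs_div]
      exact div_le_div_of_nonneg_right h1 (by positivity)
    · have := (htend.abs).div_const |τ|
      simpa using this
  have gcos_i : IntegrableOn (fun ω => g ω * Real.cos (ω * τ)) (Set.Ioi 0) := by
    apply hgi.abs.mono' ((hg.mul (cont_cos_mul τ)).aestronglyMeasurable)
    filter_upwards with ω
    rw [Real.norm_eq_abs, Pi.mul_apply, abs_mul]
    exact mul_le_of_le_one_right (abs_nonneg _) (Real.abs_cos_le_one _)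
  have g'sin_i : IntegrableOn (fun ω => g' ω * Real.sin (ω * τ)) (Set.Ioi 0) := by
    apply hg'i.abs.mono' ((hg'.mul (cont_sin_mul τ)).aestronglyMeasurable)
    filter_upwards with ω
    rw [Real.norm_eq_abs, Pi.mul_apply, abs_mul]
    exact mul_le_of_le_one_right (abs_nonneg _) (Real.abs_sin_le_one _)
  have hmain := integral_Ioi_of_hasDerivAt_of_tendsto (a := 0)
    (f := F) (f' := fun ω => g ω * Real.cos (ω * τ) + (1/τ) * (g' ω * Real.sin (ω * τ)))
    (m := 0)
    (((hg.mul (cont_sin_mul τ)).div_const τ).continuousWithinAt)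
    (fun x _ => hFd x) (gcos_i.add (g'sin_i.const_mul (1/τ))) hFtend
  rw [integral_add gcos_i (g'sin_i.const_mul (1/τ)), integral_const_mul] at hmain
  have hF0 : F 0 = 0 := by simp [hF]
  rw [hF0] at hmain
  linarith [hmain]

theorem sine_transform_decay (N : ℕ) (hN : 1 ≤ N) (f : ℝ → ℝ)
    (hf : ContDiff ℝ (2 * N + 1 : ℕ) f)
    (hint : ∀ q : ℕ, q ≤ 2 * N + 1 → Integrable (iteratedDeriv q f) (volume : Measure ℝ))
    (heven : ∀ ω : ℝ, f (-ω) = f ω)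
    (hO : f =O[nhds (0 : ℝ)] fun ω => ω ^ (2 * N))
    (hvanish : ∀ q : ℕ, q ≤ 2 * N - 1 → iteratedDeriv q f 0 = 0)
    (h : ℝ → ℝ)
    (hh : ∀ τ : ℝ, h τ = -(1 / π) * ∫ ω in Set.Ioi (0 : ℝ), f ω * Real.sin (ω * τ)) :
    ∀ τ : ℝ, τ ≠ 0 →
      |h τ| ≤ ((1 / π) * ((∫ ω in Set.Ioi (0 : ℝ), |iteratedDeriv (2 * N + 1) f ω|) +
        |iteratedDeriv (2 * N) f 0|)) / |τ| ^ (2 * N + 1) := by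
  intro τ hτ
  have hτ' : |τ| ≠ 0 := abs_ne_zero.mpr hτ
  have hτpos : 0 < |τ| := abs_pos.mpr hτ
  -- continuity of iterated derivatives
  have hcont : ∀ q : ℕ, q ≤ 2 * N + 1 → Continuous (iteratedDeriv q f) := by
    intro q hq
    exact hf.continuous_iteratedDeriv q (by exact_mod_cast hq)
  have hd : ∀ q : ℕ, q < 2 * N + 1 → ∀ x, HasDerivAt (iteratedDeriv q f) (iteratedDeriv (q+1) f x) x := by
    intro q hq x
    have hdiff : Differentiable ℝ (iteratedDeriv q f) :=
      hf.differentiable_iteratedDeriv q (by exact_mod_cast hq)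
    rw [iteratedDeriv_succ]
    exact (hdiff x).hasDerivAt
  set S : ℕ → ℝ := fun q => ∫ ω in Set.Ioi (0:ℝ), iteratedDeriv q f ω * Real.sin (ω * τ) with hS
  set Cc : ℕ → ℝ := fun q => ∫ ω in Set.Ioi (0:ℝ), iteratedDeriv q f ω * Real.cos (ω * τ) with hCc
  have step1 : ∀ q : ℕ, q ≤ 2 * N → S q = iteratedDeriv q f 0 / τ + (1/τ) * Cc (q+1) := by
    intro q hq
    exact ibp_sin _ _ (hcont q (by omega)) (hcont (q+1) (by omega)) (hd q (by omega))
      (hint q (by omega)).integrableOn (hint (q+1) (by omega)).integrableOn τ hτ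
  have step2 : ∀ q : ℕ, q ≤ 2 * N → Cc q = -(1/τ) * S (q+1) := by
    intro q hq
    exact ibp_cos _ _ (hcont q (by omega)) (hcont (q+1) (by omega)) (hd q (by omega))
      (hint q (by omega)).integrableOn (hint (q+1) (by omega)).integrableOn τ hτ
  -- induction : |S 0| = |S (2k)| / |τ|^{2k}
  have key : ∀ k : ℕ, k ≤ N → |S 0| = |S (2*k)| / |τ| ^ (2*k) := by
    intro k
    induction k with
    | zero => intro _; simp
    | succ k ih =>
      intro hk
      have hk' : k ≤ N := by omega
      rw [ih hk']
      have e1 : S (2*k) = iteratedDeriv (2*k) f 0 / τ + (1/τ) * Cc (2*k+1) :=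
        step1 (2*k) (by omega)
      have hv : iteratedDeriv (2*k) f 0 = 0 := hvanish (2*k) (by omega)
      have e2 : Cc (2*k+1) = -(1/τ) * S (2*k+1+1) := step2 (2*k+1) (by omega)
      have e3 : 2*k+1+1 = 2*(k+1) := by omega
      rw [e1, hv, e2, e3, zero_div, zero_add]
      rw [show 2*(k+1) = 2*k+1+1 from by ring, pow_succ, pow_succ]
      simp only [abs_mul, abs_neg, abs_div, abs_one]
      rw [div_eq_div_iff (by positivity) (by positivity)]
      field_simp
  have keyN := key N le_rfl
  -- bound |Cc (2N+1)| by the integral of |f^{(2N+1)}|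
  set A : ℝ := ∫ ω in Set.Ioi (0:ℝ), |iteratedDeriv (2*N+1) f ω| with hA
  set B : ℝ := |iteratedDeriv (2*N) f 0| with hB
  have hprod_i : IntegrableOn (fun ω => iteratedDeriv (2*N+1) f ω * Real.cos (ω * τ)) (Set.Ioi 0) := by
    apply (hint (2*N+1) le_rfl).integrableOn.abs.mono'
      (((hcont (2*N+1) le_rfl).mul (cont_cos_mul τ)).aestronglyMeasurable)
    filter_upwards with ω
    rw [Real.norm_eq_abs, Pi.mul_apply, abs_mul]
    exact mul_le_of_le_one_right (abs_nonneg _) (Real.abs_cos_le_one _)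
  have hCbound : |Cc (2*N+1)| ≤ A := by
    have h1 : |Cc (2*N+1)| ≤ ∫ ω in Set.Ioi (0:ℝ), |iteratedDeriv (2*N+1) f ω * Real.cos (ω * τ)| := by
      simpa only [Real.norm_eq_abs] using
        norm_integral_le_integral_norm (μ := volume.restrict (Set.Ioi (0:ℝ)))
          (f := fun ω => iteratedDeriv (2*N+1) f ω * Real.cos (ω * τ))
    refine h1.trans ?_
    apply setIntegral_mono_on hprod_i.abs (hint (2*N+1) le_rfl).integrableOn.abs measurableSet_Ioi
    intro ω _
    rw [abs_mul]
    exact mul_le_of_le_one_right (abs_nonneg _) (Real.abs_cos_le_one _)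
  have hANonneg : 0 ≤ A := by
    rw [hA]; positivity
  have bound2N : |S (2*N)| ≤ (A + B) / |τ| := by
    have e := step1 (2*N) le_rfl
    rw [e]
    calc |iteratedDeriv (2*N) f 0 / τ + (1/τ) * Cc (2*N+1)|
        ≤ |iteratedDeriv (2*N) f 0 / τ| + |(1/τ) * Cc (2*N+1)| := abs_add_le _ _
      _ = B / |τ| + (1/|τ|) * |Cc (2*N+1)| := by
          rw [abs_div, abs_mul, abs_div, abs_one]
      _ ≤ B / |τ| + (1/|τ|) * A := by
          gcongr
      _ = (A + B) / |τ| := by field_simp; ring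
  -- assemble
  have hS0 : |S 0| ≤ (A + B) / |τ| ^ (2*N+1) := by
    rw [keyN]
    rw [pow_succ]
    calc |S (2*N)| / |τ| ^ (2*N) ≤ ((A + B) / |τ|) / |τ| ^ (2*N) := by gcongr
      _ = (A + B) / (|τ| ^ (2*N) * |τ|) := by
          rw [div_div]; ring_nf
  have hπ : 0 < π := Real.pi_pos
  rw [hh τ]
  have hS0' : S 0 = ∫ ω in Set.Ioi (0:ℝ), f ω * Real.sin (ω * τ) := by
    simp [hS, iteratedDeriv_zero]
  rw [abs_mul, ← hS0']
  have habs : |-(1/π)| = 1/π := by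
    rw [abs_neg, abs_div, abs_one, abs_of_pos hπ]
  rw [habs, div_eq_mul_inv ((1/π) * (A + B))]
  calc (1/π) * |S 0| ≤ (1/π) * ((A + B) / |τ| ^ (2*N+1)) := by
        apply mul_le_mul_of_nonneg_left hS0 (by positivity)
    _ = 1/π * (A + B) * (|τ| ^ (2*N+1))⁻¹ := by
        ring
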